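/- Let ν ≥ 1/2 and let d ≥ 1 be an integer. Then the prefactor defined by the recursion β(1,ν) = 1/(2ν), β(d,ν) = (4 + 2/(2ν + d − 1)) β(d−1,ν) for d > 1, satisfies β(d,ν) ≤ 5^{d−1}/(2ν); consequently, for every integer m ≥ 1, the half-space lattice sum satisfies I(d,ν,m) ≤ 5^{d−1} / (2ν m^{2ν}). -/

import Mathlib

/-- The prefactor `β(d,ν)`: `β(1,ν) = 1/(2ν)` and
`β(d,ν) = (4 + 2/(2ν+d−1)) β(d−1,ν)` for `d > 1`.  (The value at `d = 0` is unused.) -/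
noncomputable def betaC (ν : ℝ) : ℕ → ℝ
  | 0 => 0
  | 1 => 1 / (2 * ν)
  | d + 2 => (4 + 2 / (2 * ν + (d : ℝ) + 1)) * betaC ν (d + 1)

/-- The half-space lattice sum
`I(d,ν,m) = Σ_{n>m} Σ_{q ∈ ℤ^{d−1}} (n² + |q|²)^{−ν−d/2}`. -/
noncomputable def Isum (d : ℕ) (ν : ℝ) (m : ℕ) : ℝ :=
  ∑' p : {n : ℤ // (m : ℤ) < n} × (Fin (d - 1) → ℤ),
    ((p.1.1 : ℝ) ^ 2 + ∑ i, (p.2 i : ℝ) ^ 2) ^ (-(ν + (d : ℝ) / 2))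


lemma term_bound {a t : ℝ} (ha : 1 ≤ a) (ht : 1 ≤ t) :
    (a + 1) ^ (-(t + 1)) ≤ (a ^ (-t) - (a + 1) ^ (-t)) / t := by
  have ha0 : (0:ℝ) < a := by linarith
  have ha1 : (0:ℝ) < a + 1 := by linarith
  have ht0 : (0:ℝ) < t := by linarith
  have h1a : (0:ℝ) ≤ 1 / a := by positivity
  have hbern : 1 + t / (a + 1) ≤ ((a + 1) / a) ^ t := by
    have h := one_add_mul_self_le_rpow_one_add (s := 1 / a) (by linarith) ht
    have h2 : (1 : ℝ) + 1 / a = (a + 1) / a := by field_simp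
    have h3 : t / (a + 1) ≤ t * (1 / a) := by
      rw [mul_one_div]
      gcongr
      linarith
    calc 1 + t / (a+1) ≤ 1 + t * (1/a) := by linarith
      _ ≤ (1 + 1/a) ^ t := h
      _ = ((a+1)/a) ^ t := by rw [h2]
  have hPpos : 0 < (a + 1) ^ (-t) := Real.rpow_pos_of_pos ha1 _
  have hP : (a + 1) ^ (-t) * ((a + 1) / a) ^ t = a ^ (-t) := by
    rw [Real.div_rpow ha1.le ha0.le, Real.rpow_neg ha1.le, Real.rpow_neg ha0.le]
    field_simp
  have step : (a+1) ^ (-t) * (1 + t / (a+1)) ≤ (a+1) ^ (-t) * ((a+1)/a) ^ t :=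
    mul_le_mul_of_nonneg_left hbern hPpos.le
  rw [hP] at step
  have expand : (a + 1) ^ (-(t+1)) = (a + 1) ^ (-t) * (a + 1)⁻¹ := by
    rw [show -(t+1) = -t + (-1) by ring, Real.rpow_add ha1, Real.rpow_neg_one]
  have hsplit : (a+1) ^ (-t) * (1 + t / (a+1)) = (a+1) ^ (-t) + (a+1) ^ (-t) * (a+1)⁻¹ * t := by
    field_simp
  rw [hsplit] at step
  rw [expand, le_div_iff₀ ht0]
  linarith

lemma tail_tsum_le {t c : ℝ} (ht : 1 ≤ t) (hc : 2 ≤ c) :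
    ∑' n : ℕ, ENNReal.ofReal ((c + n) ^ (-(t + 1))) ≤ ENNReal.ofReal ((c - 1) ^ (-t) / t) := by
  have ht0 : (0:ℝ) < t := by linarith
  set g : ℕ → ℝ := fun n => (c - 1 + n) ^ (-t) with hgdef
  have hgpos : ∀ n : ℕ, 0 < c - 1 + (n:ℝ) := by
    intro n; have : (0:ℝ) ≤ n := Nat.cast_nonneg n; linarith
  have hganti : ∀ n : ℕ, g (n+1) ≤ g n := by
    intro n
    apply Real.rpow_le_rpow_of_nonpos (hgpos n) (by push_cast; linarith) (by linarith)
  have hgnonneg : ∀ n : ℕ, 0 ≤ g n := fun n => Real.rpow_nonneg (hgpos n).le _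
  have hg : ∀ n : ℕ, (c + n) ^ (-(t+1)) ≤ (g n - g (n+1)) / t := by
    intro n
    have h := term_bound (a := c - 1 + n) (by have : (0:ℝ) ≤ n := Nat.cast_nonneg n; linarith) ht
    simp only [hgdef]
    push_cast
    rw [show c + (n:ℝ) = c - 1 + n + 1 from by ring,
      show c - 1 + ((n:ℝ) + 1) = c - 1 + n + 1 from by ring]
    exact h
  calc ∑' n : ℕ, ENNReal.ofReal ((c + n) ^ (-(t + 1)))
      ≤ ∑' n : ℕ, ENNReal.ofReal ((g n - g (n+1)) / t) :=
        ENNReal.tsum_le_tsum fun n => ENNReal.ofReal_le_ofReal (hg n)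
    _ ≤ ENNReal.ofReal ((c - 1) ^ (-t) / t) := by
        rw [ENNReal.tsum_eq_iSup_nat]
        apply iSup_le
        intro N
        rw [← ENNReal.ofReal_sum_of_nonneg (fun i _ => by
          have h1 := hganti i; exact div_nonneg (by linarith) ht0.le)]
        apply ENNReal.ofReal_le_ofReal
        rw [← Finset.sum_div, Finset.sum_range_sub' g]
        have : g 0 = (c-1) ^ (-t) := by simp [hgdef]
        rw [← this]
        have hN := hgnonneg N
        gcongr
        linarith

open ENNReal in
lemma int_tsum_le {s A : ℝ} (hs : 3/2 ≤ s) (hA : 4 ≤ A) :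
    ∑' k : ℤ, ENNReal.ofReal ((A + (k:ℝ)^2) ^ (-s)) ≤
      ENNReal.ofReal (5 * A ^ (-(s - 1/2))) := by
  have hA0 : (0:ℝ) < A := by linarith
  have hs0 : (0:ℝ) < s := by linarith
  set f : ℤ → ℝ≥0∞ := fun k => ENNReal.ofReal ((A + (k:ℝ)^2) ^ (-s)) with hfdef
  set R : ℝ := A ^ ((1:ℝ)/2) with hRdef
  have hR2 : 2 ≤ R := by
    have h4 : ((4:ℝ)) ^ ((1:ℝ)/2) = 2 := by
      rw [show (4:ℝ) = (2:ℝ)^(2:ℕ) by norm_num, ← Real.rpow_natCast 2 2,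
        ← Real.rpow_mul (by norm_num : (0:ℝ) ≤ 2)]
      norm_num
    have h5 := Real.rpow_le_rpow (x := 4) (y := A) (z := (1:ℝ)/2) (by norm_num) hA (by norm_num)
    rw [h4] at h5
    exact h5
  have hR0 : (0:ℝ) < R := by linarith
  set K : ℕ := ⌈R⌉₊ with hKdef
  have hK1 : R ≤ K := Nat.le_ceil R
  have hK2 : (K:ℝ) ≤ R + 1 := (Nat.ceil_lt_add_one (by linarith)).le
  set t : ℝ := 2 * s - 1 with htdef
  have ht2 : (2:ℝ) ≤ t := by rw [htdef]; linarith
  set B : ℝ := A ^ (-(s - 1/2)) with hBdef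
  have hB0 : (0:ℝ) ≤ B := Real.rpow_nonneg hA0.le _
  set C : ℝ := K * A ^ (-s) + (K:ℝ) ^ (-t) / t with hCdef
  -- bound on the half sum
  have hsum : ∑' n : ℕ, f (n + 1) ≤ ENNReal.ofReal C := by
    rw [← Summable.sum_add_tsum_nat_add' (f := fun n : ℕ => f (n + 1)) (k := K) ENNReal.summable]
    have hfin : ∑ i ∈ Finset.range K, f (i + 1) ≤ ENNReal.ofReal (K * A ^ (-s)) := by
      have hterm : ∀ i : ℕ, f (i + 1) ≤ ENNReal.ofReal (A ^ (-s)) := by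
        intro i
        apply ENNReal.ofReal_le_ofReal
        apply Real.rpow_le_rpow_of_nonpos hA0 (le_add_of_nonneg_right (by positivity)) (by linarith)
      calc ∑ i ∈ Finset.range K, f (i + 1)
          ≤ ∑ _i ∈ Finset.range K, ENNReal.ofReal (A ^ (-s)) :=
            Finset.sum_le_sum fun i _ => hterm i
        _ = K * ENNReal.ofReal (A ^ (-s)) := by
            rw [Finset.sum_const, Finset.card_range, nsmul_eq_mul]
        _ = ENNReal.ofReal (K * A ^ (-s)) := by
            rw [ENNReal.ofReal_mul (by positivity), ENNReal.ofReal_natCast]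
    have htail : ∑' i : ℕ, f (i + K + 1) ≤ ENNReal.ofReal ((K:ℝ) ^ (-t) / t) := by
      have hterm : ∀ i : ℕ, f (i + K + 1) ≤ ENNReal.ofReal (((K:ℝ) + 1 + i) ^ (-(t+1))) := by
        intro i
        apply ENNReal.ofReal_le_ofReal
        have hx : (0:ℝ) < ((K:ℝ) + 1 + i) := by positivity
        push_cast
        rw [show A + ((i:ℝ) + K + 1) ^ 2 = A + ((K:ℝ) + 1 + i) ^ 2 from by ring]
        calc (A + ((K:ℝ) + 1 + i)^2) ^ (-s)
            ≤ (((K:ℝ) + 1 + i)^2) ^ (-s) := by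
              apply Real.rpow_le_rpow_of_nonpos (by positivity) (by linarith) (by linarith)
          _ = ((K:ℝ) + 1 + i) ^ (-(t+1)) := by
              rw [← Real.rpow_natCast ((K:ℝ) + 1 + i) 2, ← Real.rpow_mul hx.le]
              congr 1
              rw [htdef]; push_cast; ring
      calc ∑' i : ℕ, f (i + K + 1)
          ≤ ∑' i : ℕ, ENNReal.ofReal (((K:ℝ) + 1 + i) ^ (-(t+1))) :=
            ENNReal.tsum_le_tsum hterm
        _ ≤ ENNReal.ofReal (((K:ℝ) + 1 - 1) ^ (-t) / t) :=
            tail_tsum_le (by linarith) (by linarith)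
        _ = ENNReal.ofReal ((K:ℝ) ^ (-t) / t) := by norm_num
    calc ∑ i ∈ Finset.range K, f (i + 1) + ∑' i : ℕ, f (i + K + 1)
        ≤ ENNReal.ofReal (K * A ^ (-s)) + ENNReal.ofReal ((K:ℝ) ^ (-t) / t) :=
          add_le_add hfin htail
      _ = ENNReal.ofReal C := by
          rw [← ENNReal.ofReal_add (by positivity) (by positivity), hCdef]
  -- the real arithmetic
  have harith : C + A ^ (-s) + C ≤ 5 * A ^ (-(s - 1/2)) := by
    have hRR : R * R⁻¹ = 1 := mul_inv_cancel₀ hR0.ne'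
    have hRinv : R⁻¹ ≤ 1/2 := by
      rw [inv_le_comm₀ hR0 (by norm_num)]; linarith
    have hRinv0 : (0:ℝ) ≤ R⁻¹ := by positivity
    have eAs : A ^ (-s) = R⁻¹ * B := by
      rw [hBdef, hRdef, ← Real.rpow_neg_one (A ^ ((1:ℝ)/2)), ← Real.rpow_mul hA0.le,
        ← Real.rpow_add hA0]
      congr 1; ring
    have hKB : (K:ℝ) ^ (-t) ≤ B := by
      calc (K:ℝ) ^ (-t) ≤ R ^ (-t) :=
            Real.rpow_le_rpow_of_nonpos hR0 hK1 (by linarith)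
        _ = B := by
            rw [hBdef, hRdef, ← Real.rpow_mul hA0.le]
            congr 1; rw [htdef]; ring
    have htB : (K:ℝ) ^ (-t) / t ≤ B / 2 := by
      have hKt0 : (0:ℝ) ≤ (K:ℝ) ^ (-t) := Real.rpow_nonneg (by positivity) _
      calc (K:ℝ) ^ (-t) / t ≤ (K:ℝ) ^ (-t) / 2 := by
            apply div_le_div_of_nonneg_left hKt0 (by norm_num) ht2 |>.trans_eq rfl
        _ ≤ B / 2 := by linarith
    have hKAs : (K:ℝ) * A ^ (-s) ≤ (3/2) * B := by
      rw [eAs]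
      calc (K:ℝ) * (R⁻¹ * B) ≤ (R + 1) * (R⁻¹ * B) :=
            mul_le_mul_of_nonneg_right hK2 (by positivity)
        _ = (R * R⁻¹) * B + R⁻¹ * B := by ring
        _ = B + R⁻¹ * B := by rw [hRR]; ring_nf
        _ ≤ (3/2) * B := by nlinarith
    have hAsB : A ^ (-s) ≤ (1/2) * B := by rw [eAs]; nlinarith
    rw [← hBdef, hCdef]
    linarith
  -- assemble
  calc ∑' k : ℤ, f k
      = (∑' n : ℕ, f (n + 1)) + f 0 + ∑' n : ℕ, f (-(n + 1)) :=
        tsum_of_add_one_of_neg_add_one ENNReal.summable ENNReal.summable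
    _ = (∑' n : ℕ, f (n + 1)) + f 0 + ∑' n : ℕ, f (n + 1) := by
        congr 1
        apply tsum_congr
        intro n
        rw [hfdef]
        simp only
        norm_num
        ring_nf
    _ ≤ ENNReal.ofReal C + ENNReal.ofReal (A ^ (-s)) + ENNReal.ofReal C := by
        refine add_le_add (add_le_add hsum ?_) hsum
        rw [hfdef]
        apply ENNReal.ofReal_le_ofReal
        norm_num
    _ = ENNReal.ofReal (C + A ^ (-s) + C) := by
        rw [← ENNReal.ofReal_add, ← ENNReal.ofReal_add] <;> positivity
    _ ≤ ENNReal.ofReal (5 * A ^ (-(s - 1/2))) := ENNReal.ofReal_le_ofReal harith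

def natIntEquiv (m : ℕ) : ℕ ≃ {n : ℤ // (m : ℤ) < n} where
  toFun j := ⟨(m : ℤ) + 1 + j, by omega⟩
  invFun n := (n.1 - m - 1).toNat
  left_inv j := by dsimp only; omega
  right_inv n := by
    rcases n with ⟨n, hn⟩
    simp only [Subtype.mk.injEq]
    omega

open ENNReal in
lemma J_bound (ν : ℝ) (hν : 1/2 ≤ ν) (m : ℕ) (hm : 1 ≤ m) :
    ∀ d : ℕ, 1 ≤ d →
    ∑' p : {n : ℤ // (m : ℤ) < n} × (Fin (d - 1) → ℤ),
      ENNReal.ofReal (((p.1.1 : ℝ) ^ 2 + ∑ i, (p.2 i : ℝ) ^ 2) ^ (-(ν + (d : ℝ) / 2)))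
      ≤ ENNReal.ofReal (5 ^ (d - 1) / (2 * ν * (m : ℝ) ^ (2 * ν))) := by
  have hν0 : (0:ℝ) < ν := by linarith
  have hm1 : (1:ℝ) ≤ (m:ℝ) := by exact_mod_cast hm
  have hmpos : (0:ℝ) < m := by linarith
  have hxlb : ∀ x : {n : ℤ // (m : ℤ) < n}, (2:ℝ) ≤ (x.1 : ℝ) := by
    intro x
    have : (2:ℤ) ≤ x.1 := by have := x.2; omega
    exact_mod_cast this
  intro d hd
  induction d, hd using Nat.le_induction with
  | base =>
    simp only [Nat.sub_self]
    rw [ENNReal.tsum_prod']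
    calc ∑' (x : {n : ℤ // (m : ℤ) < n}) (q : Fin 0 → ℤ),
          ENNReal.ofReal (((x.1 : ℝ) ^ 2 + ∑ i, (q i : ℝ) ^ 2) ^ (-(ν + ((1:ℕ) : ℝ) / 2)))
        = ∑' x : {n : ℤ // (m : ℤ) < n}, ENNReal.ofReal (((x.1 : ℝ) ^ 2) ^ (-(ν + 1 / 2))) := by
          apply tsum_congr; intro x
          rw [tsum_eq_single (default : Fin 0 → ℤ)
            (fun b hb => absurd (Subsingleton.elim b default) hb)]
          norm_num
      _ = ∑' j : ℕ, ENNReal.ofReal ((((m:ℝ) + 1) + j) ^ (-(2 * ν + 1))) := by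
          rw [← Equiv.tsum_eq (natIntEquiv m)]
          apply tsum_congr; intro j
          have hx : (0:ℝ) < (m:ℝ) + 1 + j := by positivity
          have e1 : (((natIntEquiv m j).1 : ℤ) : ℝ) = (m:ℝ) + 1 + j := by
            show (((m : ℤ) + 1 + j : ℤ) : ℝ) = (m:ℝ) + 1 + j
            push_cast; ring
          rw [e1]
          congr 1
          rw [← Real.rpow_natCast ((m:ℝ) + 1 + j) 2, ← Real.rpow_mul hx.le]
          congr 1
          push_cast; ring
      _ ≤ ENNReal.ofReal (((m:ℝ) + 1 - 1) ^ (-(2*ν)) / (2*ν)) := by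
          exact tail_tsum_le (t := 2*ν) (c := (m:ℝ) + 1) (by linarith) (by linarith)
      _ ≤ ENNReal.ofReal (5 ^ (1 - 1) / (2 * ν * (m : ℝ) ^ (2 * ν))) := by
          apply ENNReal.ofReal_le_ofReal
          apply le_of_eq
          rw [add_sub_cancel_right, Real.rpow_neg hmpos.le, pow_zero]
          have h2 : (m:ℝ) ^ (2*ν) ≠ 0 := (Real.rpow_pos_of_pos hmpos _).ne'
          field_simp
  | succ e he ih =>
    obtain ⟨c, rfl⟩ : ∃ c, e = c + 1 := ⟨e - 1, by omega⟩
    simp only [Nat.add_sub_cancel] at ih ⊢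
    have hs32 : (3:ℝ)/2 ≤ ν + ((c + 1 + 1 : ℕ):ℝ) / 2 := by
      have hc0 : (0:ℝ) ≤ (c:ℝ) := Nat.cast_nonneg c
      push_cast; linarith
    rw [ENNReal.tsum_prod']
    have key : ∀ x : {n : ℤ // (m : ℤ) < n}, ∑' q : Fin (c + 1) → ℤ,
        ENNReal.ofReal (((x.1:ℝ)^2 + ∑ i, (q i : ℝ)^2) ^ (-(ν + ((c + 1 + 1 : ℕ):ℝ)/2)))
        ≤ ∑' q' : Fin c → ℤ, ENNReal.ofReal
            (5 * (((x.1:ℝ)^2 + ∑ i, (q' i : ℝ)^2) ^ (-(ν + ((c + 1 : ℕ):ℝ)/2)))) := by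
      intro x
      rw [← Equiv.tsum_eq (Fin.consEquiv (fun _ => ℤ))]
      rw [ENNReal.tsum_prod']
      rw [ENNReal.tsum_comm]
      apply ENNReal.tsum_le_tsum
      intro q'
      have hq : ∀ k : ℤ, ((x.1:ℝ)^2 + ∑ i, ((Fin.consEquiv (fun _ => ℤ) (k, q')) i : ℝ)^2)
          = ((x.1:ℝ)^2 + ∑ i, (q' i : ℝ)^2) + (k:ℝ)^2 := by
        intro k
        have : ∑ i, ((Fin.consEquiv (fun _ => ℤ) (k, q')) i : ℝ)^2
            = (k:ℝ)^2 + ∑ i, (q' i : ℝ)^2 := by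
          rw [Fin.sum_univ_succ]
          simp [Fin.consEquiv]
        rw [this]; ring
      have hA : (4:ℝ) ≤ (x.1:ℝ)^2 + ∑ i, (q' i : ℝ)^2 := by
        have h4 : (4:ℝ) ≤ (x.1:ℝ)^2 := by nlinarith [hxlb x]
        have h0 : (0:ℝ) ≤ ∑ i, (q' i:ℝ)^2 := by positivity
        linarith
      calc ∑' k : ℤ, ENNReal.ofReal (((x.1:ℝ)^2
              + ∑ i, ((Fin.consEquiv (fun _ => ℤ) (k, q')) i : ℝ)^2) ^ (-(ν + ((c + 1 + 1 : ℕ):ℝ)/2)))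
          = ∑' k : ℤ, ENNReal.ofReal ((((x.1:ℝ)^2 + ∑ i, (q' i : ℝ)^2) + (k:ℝ)^2)
              ^ (-(ν + ((c + 1 + 1 : ℕ):ℝ)/2))) := tsum_congr fun k => by rw [hq k]
        _ ≤ ENNReal.ofReal (5 * (((x.1:ℝ)^2 + ∑ i, (q' i : ℝ)^2)
              ^ (-((ν + ((c + 1 + 1 : ℕ):ℝ)/2) - 1/2)))) := int_tsum_le hs32 hA
        _ = ENNReal.ofReal (5 * (((x.1:ℝ)^2 + ∑ i, (q' i : ℝ)^2)
              ^ (-(ν + ((c + 1 : ℕ):ℝ)/2)))) := by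
            congr 2
            push_cast
            ring_nf
    calc ∑' (x : {n : ℤ // (m : ℤ) < n}) (q : Fin (c + 1) → ℤ),
          ENNReal.ofReal (((x.1:ℝ)^2 + ∑ i, (q i : ℝ)^2) ^ (-(ν + ((c + 1 + 1 : ℕ):ℝ)/2)))
        ≤ ∑' (x : {n : ℤ // (m : ℤ) < n}) (q' : Fin c → ℤ), ENNReal.ofReal
            (5 * (((x.1:ℝ)^2 + ∑ i, (q' i : ℝ)^2) ^ (-(ν + ((c + 1 : ℕ):ℝ)/2)))) :=
          ENNReal.tsum_le_tsum key
      _ = ENNReal.ofReal 5 * ∑' (x : {n : ℤ // (m : ℤ) < n}) (q' : Fin c → ℤ),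
            ENNReal.ofReal (((x.1:ℝ)^2 + ∑ i, (q' i : ℝ)^2) ^ (-(ν + ((c + 1 : ℕ):ℝ)/2))) := by
          simp only [ENNReal.ofReal_mul (by norm_num : (0:ℝ) ≤ 5), ENNReal.tsum_mul_left]
      _ = ENNReal.ofReal 5 * ∑' p : {n : ℤ // (m : ℤ) < n} × (Fin c → ℤ),
            ENNReal.ofReal (((p.1.1:ℝ)^2 + ∑ i, (p.2 i : ℝ)^2) ^ (-(ν + ((c + 1 : ℕ):ℝ)/2))) := by
          congr 1
          exact (ENNReal.tsum_prod' (f := fun p : {n : ℤ // (m : ℤ) < n} × (Fin c → ℤ) =>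
            ENNReal.ofReal (((p.1.1:ℝ)^2 + ∑ i, (p.2 i : ℝ)^2) ^ (-(ν + ((c + 1 : ℕ):ℝ)/2))))).symm
      _ ≤ ENNReal.ofReal 5 * ENNReal.ofReal (5 ^ c / (2 * ν * (m : ℝ) ^ (2 * ν))) :=
          mul_le_mul_right ih _
      _ = ENNReal.ofReal (5 ^ (c + 1) / (2 * ν * (m : ℝ) ^ (2 * ν))) := by
          rw [← ENNReal.ofReal_mul (by norm_num)]
          congr 1
          rw [pow_succ]
          ring

lemma betaC_nonneg (ν : ℝ) (hν : 1/2 ≤ ν) : ∀ d, 0 ≤ betaC ν d := by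
  intro d
  induction d using Nat.strong_induction_on with
  | _ d ih =>
    match d with
    | 0 => simp [betaC]
    | 1 =>
      have : (0:ℝ) < ν := by linarith
      simp only [betaC]
      positivity
    | e + 2 =>
      have h1 : (0:ℝ) < 2 * ν + (e:ℝ) + 1 := by
        have : (0:ℝ) ≤ (e:ℝ) := Nat.cast_nonneg e
        linarith
      have h2 := ih (e + 1) (by omega)
      simp only [betaC]
      have : (0:ℝ) ≤ 4 + 2 / (2 * ν + (e:ℝ) + 1) := by positivity
      exact mul_nonneg this h2

lemma betaC_le (ν : ℝ) (hν : 1/2 ≤ ν) : ∀ d, 1 ≤ d → betaC ν d ≤ 5 ^ (d - 1) / (2 * ν) := by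
  intro d hd
  induction d, hd using Nat.le_induction with
  | base => simp [betaC]
  | succ e he ih =>
    obtain ⟨c, rfl⟩ : ∃ c, e = c + 1 := ⟨e - 1, by omega⟩
    have hc0 : (0:ℝ) ≤ (c:ℝ) := Nat.cast_nonneg c
    have h1 : (0:ℝ) < 2 * ν + (c:ℝ) + 1 := by linarith
    have hfac : 4 + 2 / (2 * ν + (c:ℝ) + 1) ≤ 5 := by
      have : 2 / (2 * ν + (c:ℝ) + 1) ≤ 1 := by
        rw [div_le_one h1]; linarith
      linarith
    have hnn := betaC_nonneg ν hν (c + 1)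
    have hν0 : (0:ℝ) < ν := by linarith
    simp only [Nat.add_sub_cancel] at ih ⊢
    calc betaC ν (c + 1 + 1) = (4 + 2 / (2 * ν + (c:ℝ) + 1)) * betaC ν (c + 1) := rfl
      _ ≤ 5 * betaC ν (c + 1) := mul_le_mul_of_nonneg_right hfac hnn
      _ ≤ 5 * (5 ^ c / (2 * ν)) := by
          apply mul_le_mul_of_nonneg_left _ (by norm_num)
          exact ih
      _ = 5 ^ (c + 1) / (2 * ν) := by rw [pow_succ]; ring

theorem stmt_7 (ν : ℝ) (hν : 1 / 2 ≤ ν) (d : ℕ) (hd : 1 ≤ d) :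
    betaC ν d ≤ 5 ^ (d - 1) / (2 * ν) ∧
    ∀ m : ℕ, 1 ≤ m → Isum d ν m ≤ 5 ^ (d - 1) / (2 * ν * (m : ℝ) ^ (2 * ν)) := by
  have hν0 : (0:ℝ) < ν := by linarith
  refine ⟨betaC_le ν hν d hd, ?_⟩
  intro m hm
  have hmpos : (0:ℝ) < (m:ℝ) := by
    have : (1:ℝ) ≤ (m:ℝ) := by exact_mod_cast hm
    linarith
  set C : ℝ := 5 ^ (d - 1) / (2 * ν * (m : ℝ) ^ (2 * ν)) with hCdef
  have hC0 : 0 ≤ C :=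
    div_nonneg (by positivity)
      (mul_nonneg (by linarith) (Real.rpow_nonneg hmpos.le _))
  have hJ := J_bound ν hν m hm d hd
  set f : {n : ℤ // (m : ℤ) < n} × (Fin (d - 1) → ℤ) → ℝ :=
    fun p => ((p.1.1 : ℝ) ^ 2 + ∑ i, (p.2 i : ℝ) ^ 2) ^ (-(ν + (d : ℝ) / 2)) with hfdef
  have hf : ∀ p, 0 ≤ f p := fun p => Real.rpow_nonneg (by positivity) _
  set g : {n : ℤ // (m : ℤ) < n} × (Fin (d - 1) → ℤ) → NNReal :=
    fun p => ⟨f p, hf p⟩ with hgdef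
  have hcoe : ∀ p, ((g p : ENNReal)) = ENNReal.ofReal (f p) :=
    fun p => (ENNReal.ofReal_eq_coe_nnreal (hf p)).symm
  have hJ' : ∑' p, (g p : ENNReal) ≤ ENNReal.ofReal C := by
    calc ∑' p, (g p : ENNReal) = ∑' p, ENNReal.ofReal (f p) := tsum_congr hcoe
      _ ≤ ENNReal.ofReal C := hJ
  have hsummable : Summable g :=
    ENNReal.tsum_coe_ne_top_iff_summable.mp (hJ'.trans_lt ENNReal.ofReal_lt_top).ne
  have h1 : Isum d ν m = ((∑' p, g p : NNReal) : ℝ) := by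
    rw [NNReal.coe_tsum]
    rfl
  have h2 : ((∑' p, g p : NNReal) : ENNReal) ≤ ENNReal.ofReal C := by
    rw [ENNReal.coe_tsum hsummable]
    exact hJ'
  have h3 : ((∑' p, g p : NNReal) : ℝ) ≤ C := by
    rw [ENNReal.ofReal_eq_coe_nnreal hC0, ENNReal.coe_le_coe] at h2
    exact_mod_cast h2
  rw [h1]
  exact h3
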